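/- Let α ∈ ℝ, θ ≥ 0, and P ∈ ℝ² with ‖P‖ < 1. Then ∑_{k=0}^{3} ∫_{0}^{θ} (1/2) · ρ(P, α + kπ/2 + φ)² dφ = 2θ. In words: if two perpendicular chords of a unit circle are drawn through an interior point P and rotated counterclockwise about P through an angle θ, the area they sweep out equals 2θ, depending only on θ and not on P. -/

import Mathlib

open RealInnerProductSpace Real

/-- The unit vector in direction `φ`. -/
noncomputable def u (φ : ℝ) : EuclideanSpace ℝ (Fin 2) :=
  !₂[Real.cos φ, Real.sin φ]

/-- The distance from an interior point `P` of the unit disc to the unit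
circle along the ray in direction `φ`. -/
noncomputable def ρ (P : EuclideanSpace ℝ (Fin 2)) (φ : ℝ) : ℝ :=
  -⟪P, u φ⟫ + Real.sqrt (⟪P, u φ⟫ ^ 2 + 1 - ‖P‖ ^ 2)

lemma inner_u (P : EuclideanSpace ℝ (Fin 2)) (γ : ℝ) :
    ⟪P, u γ⟫ = P 0 * Real.cos γ + P 1 * Real.sin γ := by
  simp [u, PiLp.inner_apply, Fin.sum_univ_two, mul_comm]

lemma norm_sq_eq (P : EuclideanSpace ℝ (Fin 2)) :
    ‖P‖ ^ 2 = P 0 ^ 2 + P 1 ^ 2 := by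
  rw [EuclideanSpace.real_norm_sq_eq]
  simp [Fin.sum_univ_two]

lemma rho_cont (P : EuclideanSpace ℝ (Fin 2)) : Continuous (ρ P) := by
  have : ρ P = fun φ => -(P 0 * Real.cos φ + P 1 * Real.sin φ) +
      Real.sqrt ((P 0 * Real.cos φ + P 1 * Real.sin φ) ^ 2 + 1 - ‖P‖ ^ 2) := by
    funext φ; rw [ρ, inner_u]
  rw [this]; fun_prop

lemma pointwise (P : EuclideanSpace ℝ (Fin 2)) (hP : ‖P‖ < 1) (β : ℝ) :
    ∑ k ∈ Finset.range 4, (1 / 2) * ρ P (β + k * π / 2) ^ 2 = 2 := by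
  have hs : ‖P‖ ^ 2 < 1 := by nlinarith [norm_nonneg P]
  set a := P 0; set b := P 1
  have hn : ‖P‖ ^ 2 = a ^ 2 + b ^ 2 := norm_sq_eq P
  have e0 : (β + (0:ℕ) * π / 2) = β := by push_cast; ring
  have e1 : (β + (1:ℕ) * π / 2) = β + π / 2 := by push_cast; ring
  have e2 : (β + (2:ℕ) * π / 2) = β + π := by push_cast; ring
  have e3 : (β + (3:ℕ) * π / 2) = (β + π) + π / 2 := by push_cast; ring
  have hc0 : ⟪P, u β⟫ = a * Real.cos β + b * Real.sin β := inner_u P β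
  have hc1 : ⟪P, u (β + π / 2)⟫ = -(a * Real.sin β) + b * Real.cos β := by
    rw [inner_u, Real.cos_add_pi_div_two, Real.sin_add_pi_div_two]; ring
  have hc2 : ⟪P, u (β + π)⟫ = -(a * Real.cos β + b * Real.sin β) := by
    rw [inner_u, Real.cos_add_pi, Real.sin_add_pi]; ring
  have hc3 : ⟪P, u ((β + π) + π / 2)⟫ = -(-(a * Real.sin β) + b * Real.cos β) := by
    rw [inner_u, Real.cos_add_pi_div_two, Real.sin_add_pi_div_two,
      Real.cos_add_pi, Real.sin_add_pi]; ring
  set c := a * Real.cos β + b * Real.sin β with hc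
  set d := -(a * Real.sin β) + b * Real.cos β with hd
  have hcd : c ^ 2 + d ^ 2 = a ^ 2 + b ^ 2 := by
    have h := Real.sin_sq_add_cos_sq β
    rw [hc, hd]; linear_combination (a ^ 2 + b ^ 2) * h
  have h1 : (0:ℝ) ≤ c ^ 2 + 1 - ‖P‖ ^ 2 := by nlinarith
  have h2 : (0:ℝ) ≤ d ^ 2 + 1 - ‖P‖ ^ 2 := by nlinarith
  have r1 := Real.sq_sqrt h1
  have r2 := Real.sq_sqrt h2
  simp only [Finset.sum_range_succ, Finset.sum_range_zero, zero_add]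
  rw [e0, e1, e2, e3, ρ, ρ, ρ, ρ, hc0, hc1, hc2, hc3]
  rw [show (-c) ^ 2 + 1 - ‖P‖^2 = c ^ 2 + 1 - ‖P‖^2 by ring,
      show (-d) ^ 2 + 1 - ‖P‖^2 = d ^ 2 + 1 - ‖P‖^2 by ring]
  linear_combination r1 + r2 + 2 * hcd - 2 * hn

/-- **The Crux problem** (Problem 1325 of *Crux Mathematicorum*): two
perpendicular chords of the unit circle through an interior point `P`, when
rotated counterclockwise about `P` through an angle `θ ≥ 0`, sweep out a total
area of `2θ`, independent of `P`. -/
theorem crux_problem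
    (α θ : ℝ) (hθ : 0 ≤ θ)
    (P : EuclideanSpace ℝ (Fin 2)) (hP : ‖P‖ < 1) :
    ∑ k ∈ Finset.range 4,
      ∫ φ in (0 : ℝ)..θ, (1 / 2) * ρ P (α + k * π / 2 + φ) ^ 2 = 2 * θ := by
  rw [← intervalIntegral.integral_finset_sum]
  · have : ∀ φ ∈ Set.uIcc (0:ℝ) θ,
        ∑ k ∈ Finset.range 4, (1 / 2) * ρ P (α + k * π / 2 + φ) ^ 2 = 2 := by
      intro φ _
      have := pointwise P hP (α + φ)
      simpa [show ∀ k : ℕ, α + k * π / 2 + φ = (α + φ) + k * π / 2 from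
        fun k => by ring] using this
    rw [intervalIntegral.integral_congr this]
    simp [mul_comm]
  · intro k _
    apply Continuous.intervalIntegrable
    have := rho_cont P
    fun_prop
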